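/- Let 1 ≤ p ≤ ∞ and let S : ℓ^p(ℕ) → ℓ^p(ℕ) be the left shift operator, S(x⁽⁰⁾, x⁽¹⁾, x⁽²⁾, …) = (x⁽¹⁾, x⁽²⁾, …). For every initial datum a ∈ ℓ^p(ℕ) there exist T > 0 and a continuously differentiable curve x : [0,T] → ℓ^p(ℕ) with x(0) = a and x'(t) = (x(t))⁽⁰⁾ · S(x(t)) for all t ∈ [0,T]; moreover, any two continuously differentiable solutions of this initial value problem defined on a common interval [0,T'] with 0 < T' ≤ T coincide on [0,T']. -/

import Mathlib

open Set Metric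
open scoped ENNReal

namespace Stmt1Aux

noncomputable section

variable {p : ENNReal} [Fact (1 ≤ p)]

lemma hp0 : p ≠ 0 := by
  have h : (1 : ENNReal) ≤ p := Fact.out
  exact fun h0 => by simp [h0] at h

lemma memℓp_shift (x : lp (fun _ : ℕ => ℝ) p) : Memℓp (fun n : ℕ => x (n + 1)) p := by
  rcases eq_or_ne p ∞ with rfl | hp'
  · apply memℓp_infty
    obtain ⟨C, hC⟩ := (lp.memℓp x).bddAbove
    exact ⟨C, by rintro - ⟨n, rfl⟩; exact hC ⟨n + 1, rfl⟩⟩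
  · have hpr : 0 < p.toReal := ENNReal.toReal_pos hp0 hp'
    exact memℓp_gen (((lp.memℓp x).summable hpr).comp_injective (add_left_injective 1))

/-- The left shift on `ℓ^p`. -/
def S (x : lp (fun _ : ℕ => ℝ) p) : lp (fun _ : ℕ => ℝ) p :=
  ⟨fun n => x (n + 1), memℓp_shift x⟩

@[simp] lemma S_apply (x : lp (fun _ : ℕ => ℝ) p) (n : ℕ) : S x n = x (n + 1) := rfl

lemma norm_S_le (x : lp (fun _ : ℕ => ℝ) p) : ‖S x‖ ≤ ‖x‖ := by
  rcases eq_or_ne p ∞ with rfl | hp'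
  · refine lp.norm_le_of_forall_le (norm_nonneg x) fun n => ?_
    exact lp.norm_apply_le_norm ENNReal.top_ne_zero x (n + 1)
  · have hpr : 0 < p.toReal := ENNReal.toReal_pos hp0 hp'
    refine lp.norm_le_of_tsum_le hpr (norm_nonneg x) ?_
    rw [lp.norm_rpow_eq_tsum hpr x]
    exact ((lp.memℓp (S x)).summable hpr).tsum_le_tsum_of_inj (· + 1) (add_left_injective 1)
      (fun c _ => Real.rpow_nonneg (norm_nonneg _) _)
      (fun n => le_of_eq rfl) ((lp.memℓp x).summable hpr)

lemma S_sub (x y : lp (fun _ : ℕ => ℝ) p) : S (x - y) = S x - S y := by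
  apply lp.ext
  funext n
  simp [lp.coeFn_sub]

/-- The vector field. -/
def F (x : lp (fun _ : ℕ => ℝ) p) : lp (fun _ : ℕ => ℝ) p := x 0 • S x

@[simp] lemma F_apply (x : lp (fun _ : ℕ => ℝ) p) (n : ℕ) : F x n = x 0 * x (n + 1) := by
  simp [F, lp.coeFn_smul]

lemma abs_apply_le (x : lp (fun _ : ℕ => ℝ) p) (n : ℕ) : |x n| ≤ ‖x‖ := by
  simpa using lp.norm_apply_le_norm hp0 x n

lemma F_norm_le {M : ℝ} {x : lp (fun _ : ℕ => ℝ) p} (hx : ‖x‖ ≤ M) : ‖F x‖ ≤ M * M := by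
  have h0 : (0:ℝ) ≤ ‖x‖ := norm_nonneg x
  calc ‖F x‖ = |x 0| * ‖S x‖ := by rw [F, norm_smul, Real.norm_eq_abs]
    _ ≤ M * M := by
        have h1 := abs_apply_le x 0
        have h2 := norm_S_le x
        nlinarith [abs_nonneg (x 0), norm_nonneg (S x)]

lemma F_lip {M : ℝ} {x y : lp (fun _ : ℕ => ℝ) p} (hx : ‖x‖ ≤ M) (hy : ‖y‖ ≤ M) :
    ‖F x - F y‖ ≤ 2 * M * ‖x - y‖ := by
  have key : F x - F y = x 0 • (S x - S y) + (x 0 - y 0) • S y := by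
    simp only [F, smul_sub, sub_smul]; abel
  have e0 : |x 0 - y 0| ≤ ‖x - y‖ := by
    simpa [lp.coeFn_sub] using abs_apply_le (x - y) 0
  have eS : ‖S x - S y‖ ≤ ‖x - y‖ := by rw [← S_sub]; exact norm_S_le _
  calc ‖F x - F y‖ ≤ ‖x 0 • (S x - S y)‖ + ‖(x 0 - y 0) • S y‖ := key ▸ norm_add_le _ _
    _ = |x 0| * ‖S x - S y‖ + |x 0 - y 0| * ‖S y‖ := by
        rw [norm_smul, norm_smul, Real.norm_eq_abs, Real.norm_eq_abs]
    _ ≤ 2 * M * ‖x - y‖ := by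
        have h1 := abs_apply_le x 0
        have h2 := norm_S_le y
        nlinarith [abs_nonneg (x 0), norm_nonneg (S y), norm_nonneg x,
          norm_nonneg (x - y), abs_nonneg (x 0 - y 0), norm_nonneg (S x - S y)]

lemma F_lipOnBall (M : ℝ) :
    LipschitzOnWith (2 * M).toNNReal (F : lp (fun _ : ℕ => ℝ) p → _) (closedBall 0 M) := by
  rcases le_or_gt 0 M with hM | hM
  · refine LipschitzOnWith.of_dist_le_mul fun x hx y hy => ?_
    rw [mem_closedBall_zero_iff] at hx hy
    rw [dist_eq_norm, dist_eq_norm, Real.coe_toNNReal _ (by positivity)]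
    exact F_lip hx hy
  · have : closedBall (0 : lp (fun _ : ℕ => ℝ) p) M = ∅ := by
      apply closedBall_eq_empty.2 hM
    rw [this]
    exact fun x hx => hx.elim

lemma F_cont : Continuous (F : lp (fun _ : ℕ => ℝ) p → _) := by
  have h1 : LipschitzWith 1 (fun x : lp (fun _ : ℕ => ℝ) p => x 0) := by
    refine LipschitzWith.of_dist_le_mul fun x y => ?_
    rw [dist_eq_norm, dist_eq_norm]
    push_cast
    rw [one_mul]
    simpa [lp.coeFn_sub] using abs_apply_le (x - y) 0
  have h2 : LipschitzWith 1 (S : lp (fun _ : ℕ => ℝ) p → _) := by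
    refine LipschitzWith.of_dist_le_mul fun x y => ?_
    rw [dist_eq_norm, dist_eq_norm, ← S_sub]
    push_cast
    rw [one_mul]
    exact norm_S_le _
  exact h1.continuous.smul h2.continuous

end

end Stmt1Aux


/-- Local existence and uniqueness for the infinite-dimensional ODE
`x' = x⁽⁰⁾ · S(x)` in `ℓ^p(ℕ)`, where `S` is the left shift operator. -/
theorem stmt_1 (p : ENNReal) [Fact (1 ≤ p)] (a : lp (fun _ : ℕ => ℝ) p) :
    ∃ T : ℝ, 0 < T ∧
      (∃ x : ℝ → lp (fun _ : ℕ => ℝ) p,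
        ContDiffOn ℝ 1 x (Set.Icc 0 T) ∧ x 0 = a ∧
        ∀ t ∈ Set.Icc (0:ℝ) T, ∃ dx : lp (fun _ : ℕ => ℝ) p,
          HasDerivWithinAt x dx (Set.Icc 0 T) t ∧
          ∀ n : ℕ, dx n = x t 0 * x t (n + 1)) ∧
      (∀ T' : ℝ, 0 < T' → T' ≤ T →
        ∀ y z : ℝ → lp (fun _ : ℕ => ℝ) p,
          (ContDiffOn ℝ 1 y (Set.Icc 0 T') ∧ y 0 = a ∧
            ∀ t ∈ Set.Icc (0:ℝ) T', ∃ dy : lp (fun _ : ℕ => ℝ) p,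
              HasDerivWithinAt y dy (Set.Icc 0 T') t ∧
              ∀ n : ℕ, dy n = y t 0 * y t (n + 1)) →
          (ContDiffOn ℝ 1 z (Set.Icc 0 T') ∧ z 0 = a ∧
            ∀ t ∈ Set.Icc (0:ℝ) T', ∃ dz : lp (fun _ : ℕ => ℝ) p,
              HasDerivWithinAt z dz (Set.Icc 0 T') t ∧
              ∀ n : ℕ, dz n = z t 0 * z t (n + 1)) →
          ∀ t ∈ Set.Icc (0:ℝ) T', y t = z t) := by

  classical
  set R : ℝ := ‖a‖ + 1 with hRdef
  set M : ℝ := ‖a‖ + R with hMdef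
  set C : ℝ := M * M with hCdef
  set T : ℝ := R / (C + 1) with hTdef
  have hR0 : 0 < R := by positivity
  have hM0 : 0 ≤ M := by positivity
  have hC0 : 0 ≤ C := by positivity
  have hT0 : 0 < T := by positivity
  have hball : ∀ x ∈ Metric.closedBall a R, ‖x‖ ≤ M := by
    intro x hx
    rw [mem_closedBall_iff_norm] at hx
    have := abs_norm_sub_norm_le x a
    rw [abs_le] at this
    simp only [hMdef]
    linarith [this.2]
  have hpl : IsPicardLindelof (fun (_ : ℝ) x => Stmt1Aux.F x) (tmin := 0) (tmax := T)
      ⟨0, ⟨le_rfl, hT0.le⟩⟩ a ⟨R, hR0.le⟩ 0 ⟨C, hC0⟩ (2 * M).toNNReal :=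
    { lipschitzOnWith := fun t _ => by
        refine LipschitzOnWith.of_dist_le_mul fun x hx y hy => ?_
        rw [dist_eq_norm, dist_eq_norm, Real.coe_toNNReal _ (by positivity)]
        exact Stmt1Aux.F_lip (hball x hx) (hball y hy)
      continuousOn := fun x _ => continuousOn_const
      norm_le := fun t _ x hx => Stmt1Aux.F_norm_le (hball x hx)
      mul_max_le := by
        show C * max (T - 0) (0 - 0) ≤ R - ((0 : NNReal) : ℝ)
        simp only [NNReal.coe_zero, sub_zero, sub_self]
        rw [max_eq_left hT0.le]
        have hch : C * T = C * R / (C + 1) := by rw [hTdef, mul_div_assoc]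
        rw [hch, div_le_iff₀ (by positivity)]
        nlinarith }
  obtain ⟨f, hf0, hf⟩ := hpl.exists_eq_forall_mem_Icc_hasDerivWithinAt₀
  have hud : UniqueDiffOn ℝ (Set.Icc (0:ℝ) T) := uniqueDiffOn_Icc hT0
  have hdiff : DifferentiableOn ℝ f (Set.Icc 0 T) :=
    fun t ht => (hf t ht).differentiableWithinAt
  have hcongr : Set.EqOn (derivWithin f (Set.Icc 0 T)) (fun t => Stmt1Aux.F (f t))
      (Set.Icc 0 T) := fun t ht => (hf t ht).derivWithin (hud t ht)
  refine ⟨T, hT0, ⟨f, ?_, hf0, fun t ht => ⟨Stmt1Aux.F (f t), hf t ht,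
      fun n => Stmt1Aux.F_apply (f t) n⟩⟩, ?_⟩
  · rw [show (1 : WithTop ℕ∞) = 0 + 1 by norm_num, contDiffOn_succ_iff_derivWithin hud]
    refine ⟨hdiff, ?_, ?_⟩
    · intro h
      simp at h
    · rw [contDiffOn_zero]
      exact (Stmt1Aux.F_cont.comp_continuousOn hdiff.continuousOn).congr hcongr
  · rintro T' hT'0 hT'T y z ⟨hyC, hy0, hyD⟩ ⟨hzC, hz0, hzD⟩
    have hycont : ContinuousOn y (Set.Icc 0 T') := hyC.continuousOn
    have hzcont : ContinuousOn z (Set.Icc 0 T') := hzC.continuousOn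
    obtain ⟨C₁, hC₁⟩ := isCompact_Icc.exists_bound_of_continuousOn hycont
    obtain ⟨C₂, hC₂⟩ := isCompact_Icc.exists_bound_of_continuousOn hzcont
    set M' : ℝ := max (max C₁ C₂) 0 with hM'def
    have hy' : ∀ t ∈ Set.Ico 0 T', HasDerivWithinAt y (Stmt1Aux.F (y t)) (Set.Ici t) t := by
      intro t ht
      obtain ⟨dy, hdy, hdyn⟩ := hyD t (Set.Ico_subset_Icc_self ht)
      have hdyF : dy = Stmt1Aux.F (y t) :=
        lp.ext (funext fun n => by rw [hdyn n]; exact (Stmt1Aux.F_apply _ _).symm)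
      exact hdyF ▸ hdy.mono_of_mem_nhdsWithin (Icc_mem_nhdsGE_of_mem ht)
    have hz' : ∀ t ∈ Set.Ico 0 T', HasDerivWithinAt z (Stmt1Aux.F (z t)) (Set.Ici t) t := by
      intro t ht
      obtain ⟨dz, hdz, hdzn⟩ := hzD t (Set.Ico_subset_Icc_self ht)
      have hdzF : dz = Stmt1Aux.F (z t) :=
        lp.ext (funext fun n => by rw [hdzn n]; exact (Stmt1Aux.F_apply _ _).symm)
      exact hdzF ▸ hdz.mono_of_mem_nhdsWithin (Icc_mem_nhdsGE_of_mem ht)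
    have hys : ∀ t ∈ Set.Ico 0 T', y t ∈ Metric.closedBall (0 : lp (fun _ : ℕ => ℝ) p) M' :=
      fun t ht => mem_closedBall_zero_iff.2
        ((hC₁ t (Set.Ico_subset_Icc_self ht)).trans
          ((le_max_left C₁ C₂).trans (le_max_left _ _)))
    have hzs : ∀ t ∈ Set.Ico 0 T', z t ∈ Metric.closedBall (0 : lp (fun _ : ℕ => ℝ) p) M' :=
      fun t ht => mem_closedBall_zero_iff.2
        ((hC₂ t (Set.Ico_subset_Icc_self ht)).trans
          ((le_max_right C₁ C₂).trans (le_max_left _ _)))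
    exact ODE_solution_unique_of_mem_Icc_right
      (v := fun (_ : ℝ) x => Stmt1Aux.F x)
      (s := fun _ => Metric.closedBall (0 : lp (fun _ : ℕ => ℝ) p) M')
      (fun t _ => Stmt1Aux.F_lipOnBall M') hycont hy' hys hzcont hz' hzs
      (by rw [hy0, hz0])
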